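/- Every connected simple graph G with at most two more edges than vertices (i.e., ‖G‖ − |G| ≤ 2) is planar. -/

import Mathlib

/-- `H` is a minor of `G`: branch sets witness. -/
def IsMinorOf {α β : Type*} (H : SimpleGraph α) (G : SimpleGraph β) : Prop :=
  ∃ f : α → Set β,
    (∀ a, (f a).Nonempty) ∧
    (∀ a, (G.induce (f a)).Connected) ∧
    (Pairwise fun a b => Disjoint (f a) (f b)) ∧
    (∀ a b, H.Adj a b → ∃ u ∈ f a, ∃ v ∈ f b, G.Adj u v)

/-- Planarity, via Wagner's characterization: no `K₅` and no `K₃,₃` minor. -/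
def GraphIsPlanar {β : Type*} (G : SimpleGraph β) : Prop :=
  ¬ IsMinorOf (SimpleGraph.completeGraph (Fin 5)) G ∧
  ¬ IsMinorOf (completeBipartiteGraph (Fin 3) (Fin 3)) G


open SimpleGraph in

/-- A finite connected graph has at least `|V| - 1` edges. -/
lemma conn_card_le_edges {V : Type*} [Fintype V] {G : SimpleGraph V} (h : G.Connected) :
    Fintype.card V ≤ G.edgeSet.ncard + 1 := by
  classical
  obtain ⟨r⟩ := h.nonempty
  have key : ∀ v : V, v ≠ r → ∃ w : V, G.Adj v w ∧ G.dist w r < G.dist v r := by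
    intro v hv
    obtain ⟨p, hp⟩ := h.exists_walk_length_eq_dist v r
    obtain ⟨w, hadj, q, hq⟩ := SimpleGraph.Walk.exists_eq_cons_of_ne hv p
    subst hq
    refine ⟨w, hadj, ?_⟩
    have h1 : G.dist w r ≤ q.length := SimpleGraph.dist_le q
    simp only [SimpleGraph.Walk.length_cons] at hp
    omega
  choose w hadj hlt using key
  let F : {v : V // v ≠ r} → G.edgeSet := fun v => ⟨s(v.1, w v.1 v.2), hadj v.1 v.2⟩
  have hinj : Function.Injective F := by
    rintro ⟨v₁, h₁⟩ ⟨v₂, h₂⟩ hF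
    have hF := congrArg Subtype.val hF
    change s(v₁, w v₁ h₁) = s(v₂, w v₂ h₂) at hF
    rw [Sym2.eq_iff] at hF
    rcases hF with ⟨rfl, -⟩ | ⟨e1, e2⟩
    · rfl
    · exfalso
      have h3 := hlt v₁ h₁
      have h4 := hlt v₂ h₂
      rw [e2] at h3
      rw [← e1] at h4
      omega
  have hcard : Fintype.card {v : V // v ≠ r} ≤ Fintype.card G.edgeSet :=
    Fintype.card_le_of_injective F hinj
  have h5 : Fintype.card {v : V // v ≠ r} = Fintype.card V - 1 := by
    simp [Fintype.card_subtype_compl]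
  have h6 : G.edgeSet.ncard = Fintype.card G.edgeSet := by
    rw [← Nat.card_coe_set_eq, Nat.card_eq_fintype_card]
  have h7 : 0 < Fintype.card V := Fintype.card_pos_iff.mpr ⟨r⟩
  omega

open SimpleGraph in
lemma induce_card_le {V : Type*} [Fintype V] {G : SimpleGraph V} {s : Set V}
    (h : (G.induce s).Connected) :
    s.ncard ≤ {e ∈ G.edgeSet | ∀ v ∈ e, v ∈ s}.ncard + 1 := by
  classical
  have h1 := conn_card_le_edges h
  have h2 : Fintype.card s = s.ncard := by
    rw [← Nat.card_coe_set_eq, Nat.card_eq_fintype_card]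
  rw [h2] at h1
  refine h1.trans (Nat.add_le_add_right ?_ 1)
  have himg : Sym2.map (Subtype.val) '' (G.induce s).edgeSet ⊆ {e ∈ G.edgeSet | ∀ v ∈ e, v ∈ s} := by
    rintro e ⟨e', he', rfl⟩
    induction e' using Sym2.ind with
    | _ u v =>
      rw [SimpleGraph.mem_edgeSet] at he'
      simp only [SimpleGraph.comap_adj, SimpleGraph.induce_eq_coe_induce_top] at he'
      refine ⟨?_, ?_⟩
      · simpa using SimpleGraph.Subgraph.coe_adj_sub _ _ _ he'
      · intro x hx
        simp only [Sym2.map_pair_eq, Sym2.mem_iff] at hx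
        rcases hx with rfl | rfl
        · exact u.2
        · exact v.2
  calc (G.induce s).edgeSet.ncard
      = (Sym2.map Subtype.val '' (G.induce s).edgeSet).ncard :=
        (Set.ncard_image_of_injective _ (Sym2.map.injective Subtype.val_injective)).symm
    _ ≤ _ := Set.ncard_le_ncard himg (Set.toFinite _)

lemma walk_boundary {V : Type*} {G : SimpleGraph V} {T : Set V} :
    ∀ {x y : V}, G.Walk x y → x ∉ T → y ∈ T → ∃ w ∉ T, ∃ v ∈ T, G.Adj w v := by
  intro x y p
  induction p with
  | nil => intro hx hy; exact absurd hy hx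
  | @cons a b c h q ih =>
    intro hx hy
    by_cases hb : b ∈ T
    · exact ⟨a, hx, b, hb, h⟩
    · exact ih hb hy

open SimpleGraph in
lemma minor_count {V α : Type*} [Fintype V] [Fintype α] [Nonempty α]
    {G : SimpleGraph V} {H : SimpleGraph α} (hconn : G.Connected) :
    ∀ (n : ℕ) (f : α → Set V), ((⋃ a, f a)ᶜ).ncard = n →
    (∀ a, (f a).Nonempty) → (∀ a, (G.induce (f a)).Connected) →
    (Pairwise fun a b => Disjoint (f a) (f b)) →
    (∀ a b, H.Adj a b → ∃ u ∈ f a, ∃ v ∈ f b, G.Adj u v) →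
    Fintype.card V + H.edgeSet.ncard ≤ G.edgeSet.ncard + Fintype.card α := by
  classical
  intro n
  induction n with
  | zero =>
    intro f hW h1 h2 h3 h4
    have hcover : ∀ x : V, ∃ a, x ∈ f a := by
      intro x
      by_contra hx
      have hxW : x ∈ (⋃ a, f a)ᶜ := by simpa [Set.mem_iUnion] using hx
      rw [(Set.ncard_eq_zero (Set.toFinite _)).mp hW] at hxW
      exact hxW
    have huniq : ∀ {x : V} {a b : α}, x ∈ f a → x ∈ f b → a = b := by
      intro x a b ha hb
      by_contra hab
      exact Set.disjoint_left.mp (h3 hab) ha hb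
    set E : α → Set (Sym2 V) := fun a => {e ∈ G.edgeSet | ∀ v ∈ e, v ∈ f a} with hEdef
    set C : Set (Sym2 V) := G.edgeSet \ ⋃ a, E a with hCdef
    have hEcard : ∀ a, (f a).ncard ≤ (E a).ncard + 1 := fun a => induce_card_le (h2 a)
    -- H edges inject into C
    have hHC : H.edgeSet.ncard ≤ C.ncard := by
      set g : V → Option α := fun x => some (hcover x).choose with hg
      have hgmem : ∀ {x : V} {a : α}, x ∈ f a → g x = some a := fun {x a} hx =>
        congrArg some (huniq (hcover x).choose_spec hx)
      have hsub : Sym2.map (some : α → Option α) '' H.edgeSet ⊆ Sym2.map g '' C := by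
        rintro e ⟨e', he', rfl⟩
        induction e' using Sym2.ind with
        | _ a b =>
          rw [SimpleGraph.mem_edgeSet] at he'
          obtain ⟨u, hu, v, hv, huv⟩ := h4 a b he'
          refine ⟨s(u, v), ⟨huv, fun hmem => ?_⟩, ?_⟩
          · obtain ⟨Ec, ⟨c, rfl⟩, hmemc⟩ := hmem
            have hu' : u ∈ f c := hmemc.2 u (by simp)
            have hv' : v ∈ f c := hmemc.2 v (by simp)
            exact he'.ne ((huniq hu hu').trans (huniq hv hv').symm)
          · simp [Sym2.map_pair_eq, hgmem hu, hgmem hv]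
      calc H.edgeSet.ncard
          = (Sym2.map (some : α → Option α) '' H.edgeSet).ncard :=
            (Set.ncard_image_of_injective _ (Sym2.map.injective (Option.some_injective _))).symm
        _ ≤ (Sym2.map g '' C).ncard := Set.ncard_le_ncard hsub (Set.toFinite _)
        _ ≤ C.ncard := Set.ncard_image_le (Set.toFinite _)
    -- the E a are pairwise disjoint
    have hdisjE : ∀ a b : α, a ≠ b → Disjoint (E a) (E b) := by
      intro a b hab
      rw [Set.disjoint_left]
      intro e hea heb
      induction e using Sym2.ind with
      | _ u v =>
        exact hab (huniq (hea.2 u (by simp)) (heb.2 u (by simp)))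
    -- total count
    have hsum : (∑ a, (E a).ncard) + C.ncard ≤ G.edgeSet.ncard := by
      have hcardE : ∀ a, (E a).ncard = (E a).toFinset.card := fun a =>
        Set.ncard_eq_toFinset_card' _
      have hcardC : C.ncard = C.toFinset.card := Set.ncard_eq_toFinset_card' _
      have hbU : (Finset.univ.biUnion (fun a => (E a).toFinset)).card
          = ∑ a, (E a).toFinset.card := by
        apply Finset.card_biUnion
        intro a _ b _ hab
        simpa [Set.disjoint_toFinset] using hdisjE a b hab
      have hdisjC : Disjoint (Finset.univ.biUnion (fun a => (E a).toFinset)) C.toFinset := by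
        rw [Finset.disjoint_left]
        intro e he heC
        simp only [Finset.mem_biUnion, Set.mem_toFinset] at he heC
        obtain ⟨a, -, hea⟩ := he
        exact heC.2 (Set.mem_iUnion.mpr ⟨a, hea⟩)
      have hsubset : Finset.univ.biUnion (fun a => (E a).toFinset) ∪ C.toFinset
          ⊆ G.edgeSet.toFinset := by
        intro e he
        simp only [Finset.mem_union, Finset.mem_biUnion, Set.mem_toFinset] at he ⊢
        rcases he with ⟨a, -, hea⟩ | heC
        · exact hea.1
        · exact heC.1
      have := Finset.card_le_card hsubset
      rw [Finset.card_union_of_disjoint hdisjC, hbU] at this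
      rw [Set.ncard_eq_toFinset_card' G.edgeSet]
      simp only [hcardE, hcardC]
      exact this
    -- vertex count
    have hV : Fintype.card V = ∑ a, (f a).ncard := by
      have huniv : (Finset.univ : Finset V) = Finset.univ.biUnion (fun a => (f a).toFinset) := by
        ext x
        simp only [Finset.mem_univ, Finset.mem_biUnion, Set.mem_toFinset, true_iff]
        obtain ⟨a, ha⟩ := hcover x
        exact ⟨a, trivial, ha⟩
      have := congrArg Finset.card huniv
      rw [Finset.card_univ, Finset.card_biUnion] at this
      · rw [this]
        congr 1
        ext a
        exact (Set.ncard_eq_toFinset_card' _).symm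
      · intro a _ b _ hab
        simpa [Set.disjoint_toFinset] using h3 hab
    have hVle : Fintype.card V ≤ (∑ a, (E a).ncard) + Fintype.card α := by
      rw [hV]
      calc ∑ a, (f a).ncard ≤ ∑ a, ((E a).ncard + 1) := Finset.sum_le_sum fun a _ => hEcard a
        _ = (∑ a, (E a).ncard) + Fintype.card α := by
          rw [Finset.sum_add_distrib, Finset.sum_const, Finset.card_univ, smul_eq_mul, mul_one]
    calc Fintype.card V + H.edgeSet.ncard
        ≤ ((∑ a, (E a).ncard) + Fintype.card α) + C.ncard := add_le_add hVle hHC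
      _ = ((∑ a, (E a).ncard) + C.ncard) + Fintype.card α := by ring
      _ ≤ G.edgeSet.ncard + Fintype.card α := Nat.add_le_add_right hsum _
  | succ n ih =>
    intro f hW h1 h2 h3 h4
    have hWne : ((⋃ a, f a)ᶜ).Nonempty :=
      Set.nonempty_of_ncard_ne_zero (by omega)
    obtain ⟨w₀, hw₀⟩ := hWne
    obtain ⟨a₀⟩ : Nonempty α := inferInstance
    obtain ⟨u₀, hu₀⟩ := h1 a₀
    have hu₀S : u₀ ∈ ⋃ a, f a := Set.mem_iUnion.mpr ⟨a₀, hu₀⟩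
    obtain ⟨p⟩ := hconn.preconnected w₀ u₀
    obtain ⟨w, hw, v, hv, hadj⟩ := walk_boundary p hw₀ hu₀S
    obtain ⟨a, hva⟩ := Set.mem_iUnion.mp hv
    have hvw : v ∈ insert w (f a) := Set.mem_insert_of_mem _ hva
    set f' : α → Set V := fun b => if b = a then insert w (f a) else f b with hf'
    have hfa' : ∀ b, f b ⊆ f' b := by
      intro b x hx
      by_cases hb : b = a
      · subst hb
        simp only [f', if_pos rfl]
        exact Set.mem_insert_of_mem _ hx
      · simp only [f', if_neg hb]
        exact hx
    have hwnot : ∀ d, w ∉ f d := fun d hd => hw (Set.mem_iUnion.mpr ⟨d, hd⟩)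
    have hUnion : (⋃ b, f' b) = insert w (⋃ b, f b) := by
      ext x
      simp only [Set.mem_iUnion, Set.mem_insert_iff]
      constructor
      · rintro ⟨b, hb⟩
        by_cases hba : b = a
        · subst hba
          simp only [f', if_pos rfl, Set.mem_insert_iff] at hb
          rcases hb with rfl | hb
          · exact Or.inl rfl
          · exact Or.inr ⟨b, hb⟩
        · simp only [f', if_neg hba] at hb
          exact Or.inr ⟨b, hb⟩
      · rintro (rfl | ⟨b, hb⟩)
        · exact ⟨a, by simp only [f', if_pos rfl]; exact Set.mem_insert _ _⟩
        · exact ⟨b, hfa' b hb⟩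
    have hW' : ((⋃ b, f' b)ᶜ).ncard = n := by
      have hceq : (insert w (⋃ b, f b))ᶜ = (⋃ b, f b)ᶜ \ {w} := by
        ext x
        simp only [Set.mem_compl_iff, Set.mem_insert_iff, Set.mem_diff,
          Set.mem_singleton_iff, not_or]
        tauto
      rw [hUnion, hceq, Set.ncard_diff_singleton_of_mem (show w ∈ (⋃ b, f b)ᶜ from hw), hW]
      omega
    refine ih f' hW' (fun b => Set.Nonempty.mono (hfa' b) (h1 b)) ?_ ?_ ?_
    · intro b
      by_cases hb : b = a
      · subst hb
        have hsing : (G.induce {w}).Connected := by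
          have := (SimpleGraph.Subgraph.singletonSubgraph_connected (G := G) (v := w)).induce_verts
          simpa using this
        have : (G.induce (f b ∪ {w})).Connected :=
          SimpleGraph.connected_induce_union (h2 b).preconnected hsing.preconnected hva rfl (hadj.symm)
        have heq : f' b = f b ∪ {w} := by
          simp only [f', if_pos rfl, Set.union_singleton]
        rw [heq]
        exact this
      · have heq : f' b = f b := by simp only [f', if_neg hb]
        rw [heq]
        exact h2 b
    · intro b c hbc
      by_cases hb : b = a <;> by_cases hc : c = a
      · exact absurd (hb.trans hc.symm) hbc
      · subst hb
        simp only [f', if_pos rfl, if_neg hc]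
        rw [Set.disjoint_left]
        rintro x (rfl | hx)
        · exact hwnot c
        · exact fun hxc => Set.disjoint_left.mp (h3 hbc) hx hxc
      · subst hc
        simp only [f', if_pos rfl, if_neg hb]
        rw [Set.disjoint_right]
        rintro x (rfl | hx)
        · exact hwnot b
        · exact fun hxb => Set.disjoint_left.mp (h3 hbc) hxb hx
      · simp only [f', if_neg hb, if_neg hc]
        exact h3 hbc
    · intro b c hbc
      obtain ⟨u, hu, v', hv', h'⟩ := h4 b c hbc
      exact ⟨u, hfa' b hu, v', hfa' c hv', h'⟩

open SimpleGraph in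

instance myDecInst1 : DecidableRel (completeBipartiteGraph (Fin 3) (Fin 3)).Adj := fun v w => by
  change Decidable (v.isLeft ∧ w.isRight ∨ v.isRight ∧ w.isLeft)
  infer_instance

instance myDecInst2 : DecidableRel (SimpleGraph.completeGraph (Fin 5)).Adj :=
  inferInstanceAs (DecidableRel (⊤ : SimpleGraph (Fin 5)).Adj)

lemma K5_count : (SimpleGraph.completeGraph (Fin 5)).edgeSet.ncard = 10 := by
  rw [← SimpleGraph.coe_edgeFinset, Set.ncard_coe_finset]
  decide

lemma K33_count : (completeBipartiteGraph (Fin 3) (Fin 3)).edgeSet.ncard = 9 := by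
  rw [← SimpleGraph.coe_edgeFinset, Set.ncard_coe_finset]
  decide

/-- Every connected simple graph with `‖G‖ - |G| ≤ 2` is planar. -/
theorem stmt0 {V : Type} [Fintype V] (G : SimpleGraph V)
    (hconn : G.Connected) (h : G.edgeSet.ncard ≤ Fintype.card V + 2) :
    GraphIsPlanar G := by
  classical
  constructor
  · rintro ⟨f, h1, h2, h3, h4⟩
    have hle := minor_count (H := SimpleGraph.completeGraph (Fin 5)) hconn
      ((⋃ a, f a)ᶜ).ncard f rfl h1 h2 h3 h4
    rw [K5_count, Fintype.card_fin] at hle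
    linarith
  · rintro ⟨f, h1, h2, h3, h4⟩
    have hle := minor_count (H := completeBipartiteGraph (Fin 3) (Fin 3)) hconn
      ((⋃ a, f a)ᶜ).ncard f rfl h1 h2 h3 h4
    rw [K33_count] at hle
    have hcard : Fintype.card (Fin 3 ⊕ Fin 3) = 6 := by simp
    rw [hcard] at hle
    linarith
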